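/- For density matrices ρ and σ on a finite-dimensional Hilbert space with supp ρ ⊆ supp σ, the Umegaki relative entropy satisfies D(ρ‖σ) ≥ −2 log F(ρ,σ), where F(ρ,σ) := Tr|√ρ√σ| is the fidelity. -/

import Mathlib

open scoped Matrix ComplexOrder
variable {n : Type*} [Fintype n] [DecidableEq n]

/-- Apply a real function to a Hermitian matrix via its spectral decomposition. -/
noncomputable def matFun (f : ℝ → ℝ) (A : Matrix n n ℂ) : Matrix n n ℂ :=
  if hA : A.IsHermitian then
    (hA.eigenvectorUnitary : Matrix n n ℂ) *
      Matrix.diagonal (fun i => (f (hA.eigenvalues i) : ℂ)) *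
      (star (hA.eigenvectorUnitary : Matrix n n ℂ))
  else 0

/-- Matrix logarithm. -/
noncomputable def mlog (A : Matrix n n ℂ) : Matrix n n ℂ := matFun Real.log A

/-- Matrix square root. -/
noncomputable def msqrt (A : Matrix n n ℂ) : Matrix n n ℂ := matFun Real.sqrt A

/-- Umegaki relative entropy `D(X‖Y) = Tr[X log X − X log Y]`. -/
noncomputable def relEnt (X Y : Matrix n n ℂ) : ℝ :=
  (Matrix.trace (X * mlog X) - Matrix.trace (X * mlog Y)).re

/-- Quantum fidelity `F(ρ,σ) = Tr|√ρ√σ|`. -/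
noncomputable def fidelity (ρ σ : Matrix n n ℂ) : ℝ :=
  (Matrix.trace (msqrt ((msqrt ρ * msqrt σ)ᴴ * (msqrt ρ * msqrt σ)))).re

/-- Gibbs state `exp(−βH)/Tr exp(−βH)`. -/
noncomputable def gibbs (β : ℝ) (H : Matrix n n ℂ) : Matrix n n ℂ :=
  ((Matrix.trace (matFun Real.exp ((-β) • H))).re)⁻¹ • matFun Real.exp ((-β) • H)

/-- Equilibrium free energy `−β⁻¹ log Tr exp(−βH)`. -/
noncomputable def freeEnergy (β : ℝ) (H : Matrix n n ℂ) : ℝ :=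
  -(β⁻¹ * Real.log ((Matrix.trace (matFun Real.exp ((-β) • H))).re))

/-- A density matrix: positive semidefinite with unit trace. -/
def IsDensity (ρ : Matrix n n ℂ) : Prop := ρ.PosSemidef ∧ ρ.trace = 1

/-- Trace-preserving map. -/
def IsTP (Φ : Matrix n n ℂ → Matrix n n ℂ) : Prop := ∀ X, (Φ X).trace = X.trace

/-- Complete positivity: every ampliation `Φ ⊗ id_m` maps positive semidefinite
matrices to positive semidefinite matrices. -/
def IsCompletelyPositive (Φ : Matrix n n ℂ → Matrix n n ℂ) : Prop :=
  ∀ (m : ℕ) (M : Matrix (n × Fin m) (n × Fin m) ℂ), M.PosSemidef →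
    (Matrix.of fun (p q : n × Fin m) => Φ (Matrix.of fun a b => M (a, p.2) (b, q.2)) p.1 q.1).PosSemidef

/-- CPTP: linear, completely positive, trace-preserving. -/
def IsCPTP (Φ : Matrix n n ℂ → Matrix n n ℂ) : Prop :=
  IsLinearMap ℂ Φ ∧ IsCompletelyPositive Φ ∧ IsTP Φ

/-- `Φd` is the trace-dual (Hilbert–Schmidt adjoint) of `Φ`:
`Tr[Φ(X) Y] = Tr[X Φ†(Y)]` for all `X, Y`. -/
def IsTraceDual (Φ Φd : Matrix n n ℂ → Matrix n n ℂ) : Prop :=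
  ∀ X Y, (Φ X * Y).trace = (X * Φd Y).trace

section Helpers
set_option linter.unusedSectionVars false
open Matrix

lemma step1 (U V D E : Matrix n n ℂ) :
    Matrix.trace (U * D * Uᴴ * (V * E * Vᴴ)) =
    Matrix.trace (D * ((Uᴴ * V) * (E * (Uᴴ * V)ᴴ))) := by
  simp only [Matrix.conjTranspose_mul, Matrix.conjTranspose_conjTranspose, Matrix.mul_assoc]
  rw [Matrix.trace_mul_comm]
  simp only [Matrix.mul_assoc]

lemma step2 (M : Matrix n n ℂ) (a b : n → ℂ) :
    Matrix.trace (Matrix.diagonal a * (M * (Matrix.diagonal b * Mᴴ))) =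
    ∑ i, ∑ j, a i * b j * (M i j * star (M i j)) := by
  simp only [Matrix.trace, Matrix.diag_apply, Matrix.mul_apply, Matrix.diagonal_apply,
    Matrix.conjTranspose_apply, Finset.mul_sum, Finset.sum_mul, ite_mul, zero_mul]
  simp [Finset.sum_ite_eq, Finset.mul_sum]
  congr 1; ext i; congr 1; ext j; ring

lemma matFun_eq {A : Matrix n n ℂ} (hA : A.IsHermitian) (f : ℝ → ℝ) :
    matFun f A = (hA.eigenvectorUnitary : Matrix n n ℂ) *
      Matrix.diagonal (fun i => (f (hA.eigenvalues i) : ℂ)) *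
      ((hA.eigenvectorUnitary : Matrix n n ℂ))ᴴ := by
  rw [matFun, dif_pos hA, Matrix.star_eq_conjTranspose]

lemma spectral (A : Matrix n n ℂ) (hA : A.IsHermitian) :
    A = (hA.eigenvectorUnitary : Matrix n n ℂ) *
      Matrix.diagonal (fun i => ((hA.eigenvalues i : ℝ) : ℂ)) *
      ((hA.eigenvectorUnitary : Matrix n n ℂ))ᴴ := by
  conv_lhs => rw [hA.spectral_theorem]
  rw [Unitary.conjStarAlgAut_apply]
  rw [Matrix.star_eq_conjTranspose]
  rfl

lemma unit1 {A : Matrix n n ℂ} (hA : A.IsHermitian) :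
    ((hA.eigenvectorUnitary : Matrix n n ℂ))ᴴ * (hA.eigenvectorUnitary : Matrix n n ℂ) = 1 := by
  rw [← Matrix.star_eq_conjTranspose]
  exact Unitary.coe_star_mul_self hA.eigenvectorUnitary

lemma unit2 {A : Matrix n n ℂ} (hA : A.IsHermitian) :
    (hA.eigenvectorUnitary : Matrix n n ℂ) * ((hA.eigenvectorUnitary : Matrix n n ℂ))ᴴ = 1 := by
  rw [← Matrix.star_eq_conjTranspose]
  exact Unitary.coe_mul_star_self hA.eigenvectorUnitary

lemma conj_trace_eq (W X : Matrix n n ℂ) (h2 : W * Wᴴ = 1) :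
    (Wᴴ * X * W).trace = X.trace := by
  rw [Matrix.mul_assoc, Matrix.trace_mul_comm, Matrix.mul_assoc, h2, mul_one]

lemma trace_conj (W D : Matrix n n ℂ) (h1 : Wᴴ * W = 1) :
    (W * D * Wᴴ).trace = D.trace := by
  rw [Matrix.trace_mul_comm, ← Matrix.mul_assoc, h1, one_mul]

lemma conj_diag (W D : Matrix n n ℂ) (h1 : Wᴴ * W = 1) :
    Wᴴ * (W * D * Wᴴ) * W = D := by
  rw [Matrix.mul_assoc W D, ← Matrix.mul_assoc Wᴴ W, h1, one_mul, Matrix.mul_assoc, h1, mul_one]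

lemma traceform (U V : Matrix n n ℂ) (a b : n → ℝ) :
    (Matrix.trace ((U * Matrix.diagonal (fun i => ((a i : ℝ) : ℂ)) * Uᴴ) *
      (V * Matrix.diagonal (fun j => ((b j : ℝ) : ℂ)) * Vᴴ))).re
    = ∑ i, ∑ j, a i * b j * Complex.normSq ((Uᴴ * V) i j) := by
  rw [step1, step2, Complex.re_sum]
  refine Finset.sum_congr rfl fun i _ => ?_
  rw [Complex.re_sum]
  refine Finset.sum_congr rfl fun j _ => ?_
  rw [Complex.star_def, Complex.mul_conj, ← Complex.ofReal_mul, ← Complex.ofReal_mul,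
    Complex.ofReal_re]

lemma re_trace_le_msqrt (A : Matrix n n ℂ) :
    (Matrix.trace A).re ≤ (Matrix.trace (msqrt (Aᴴ * A))).re := by
  have hB : (Aᴴ * A).PosSemidef := Matrix.posSemidef_conjTranspose_mul_self A
  set hBH := hB.1 with hBHdef
  set W : Matrix n n ℂ := (hBH.eigenvectorUnitary : Matrix n n ℂ) with hW
  set d : n → ℝ := hBH.eigenvalues with hd
  have hd0 : ∀ i, 0 ≤ d i := hB.eigenvalues_nonneg
  have hmt : (Matrix.trace (msqrt (Aᴴ * A))).re = ∑ j, Real.sqrt (d j) := by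
    rw [msqrt, matFun_eq hBH, Matrix.trace_mul_comm, ← Matrix.mul_assoc, unit1 hBH, one_mul,
      Matrix.trace_diagonal]
    rw [Complex.re_sum]
    simp [hd]
  set A' : Matrix n n ℂ := Wᴴ * A * W with hA'
  have htr : Matrix.trace A' = Matrix.trace A := by
    exact conj_trace_eq W A (unit2 hBH)
  have hsq : A'ᴴ * A' = Matrix.diagonal (fun i => ((d i : ℝ) : ℂ)) := by
    have : A'ᴴ * A' = Wᴴ * (Aᴴ * A) * W := by
      rw [hA']
      simp only [Matrix.conjTranspose_mul, Matrix.conjTranspose_conjTranspose, Matrix.mul_assoc]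
      rw [← Matrix.mul_assoc W Wᴴ, unit2 hBH, one_mul]
    rw [this]
    conv_lhs => rw [spectral (Aᴴ * A) hBH]
    exact conj_diag W _ (unit1 hBH)
  have hdj : ∀ j, ∑ i, Complex.normSq (A' i j) = d j := by
    intro j
    have := congrFun (congrFun hsq j) j
    rw [Matrix.mul_apply, Matrix.diagonal_apply_eq] at this
    have : (∑ i, (Complex.normSq (A' i j) : ℂ)) = ((d j : ℝ) : ℂ) := by
      rw [← this]
      congr 1; ext i
      rw [Matrix.conjTranspose_apply, Complex.star_def, mul_comm, Complex.mul_conj]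
    exact_mod_cast this
  have hbound : ∀ j, (A' j j).re ≤ Real.sqrt (d j) := by
    intro j
    calc (A' j j).re ≤ ‖A' j j‖ := Complex.re_le_norm _
    _ = Real.sqrt (Complex.normSq (A' j j)) := by rw [Complex.norm_def]
    _ ≤ Real.sqrt (d j) := by
        apply Real.sqrt_le_sqrt
        rw [← hdj j]
        exact Finset.single_le_sum (f := fun i => Complex.normSq (A' i j))
          (fun i _ => Complex.normSq_nonneg _) (Finset.mem_univ j)
  rw [hmt, ← htr, Matrix.trace, Complex.re_sum]
  exact Finset.sum_le_sum (fun j _ => hbound j)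

lemma jensen_core (p q : n → ℝ) (c : n → n → ℝ)
    (hp : ∀ i, 0 ≤ p i) (hq : ∀ j, 0 ≤ q j) (hc : ∀ i j, 0 ≤ c i j)
    (hrow : ∀ i, ∑ j, c i j = 1) (hpsum : ∑ i, p i = 1)
    (hkey : ∀ i j, q j = 0 → c i j * p i = 0) :
    Real.exp (((∑ i, ∑ j, c i j * p i * Real.log (q j)) - ∑ i, p i * Real.log (p i)) / 2)
      ≤ ∑ i, ∑ j, c i j * Real.sqrt (p i) * Real.sqrt (q j) := by
  set w : n × n → ℝ := fun ij => c ij.1 ij.2 * p ij.1 with hw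
  set x : n × n → ℝ := fun ij => (Real.log (q ij.2) - Real.log (p ij.1)) / 2 with hx
  have hw0 : ∀ ij ∈ Finset.univ (α := n × n), 0 ≤ w ij :=
    fun ij _ => mul_nonneg (hc _ _) (hp _)
  have hwsum : ∑ ij : n × n, w ij = 1 := by
    rw [Fintype.sum_prod_type]
    calc ∑ i, ∑ j, c i j * p i = ∑ i, (∑ j, c i j) * p i := by
          simp [Finset.sum_mul]
    _ = 1 := by simp only [hrow, one_mul, hpsum]
  have hjen := (convexOn_exp).map_sum_le hw0 hwsum (fun ij _ => Set.mem_univ (x ij))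
  simp only [smul_eq_mul] at hjen
  have hterm : ∀ ij : n × n, w ij * Real.exp (x ij)
      = c ij.1 ij.2 * Real.sqrt (p ij.1) * Real.sqrt (q ij.2) := by
    rintro ⟨i, j⟩
    simp only [hw, hx]
    rcases eq_or_lt_of_le (hp i) with h0p | h0p
    · rw [← h0p]; simp
    rcases eq_or_lt_of_le (hq j) with h0q | h0q
    · rw [← h0q, Real.sqrt_zero, mul_zero]
      rw [hkey i j h0q.symm, zero_mul]
    · have hsp : Real.sqrt (p i) ≠ 0 := ne_of_gt (Real.sqrt_pos.2 h0p)
      have hsq' : Real.sqrt (q j) ≠ 0 := ne_of_gt (Real.sqrt_pos.2 h0q)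
      have hlog : (Real.log (q j) - Real.log (p i)) / 2
          = Real.log (Real.sqrt (q j) / Real.sqrt (p i)) := by
        rw [Real.log_div hsq' hsp, Real.log_sqrt (hq j), Real.log_sqrt (hp i)]
        ring
      rw [hlog, Real.exp_log (by positivity)]
      have hps : p i / Real.sqrt (p i) = Real.sqrt (p i) := Real.div_sqrt
      calc c i j * p i * (Real.sqrt (q j) / Real.sqrt (p i))
          = c i j * (p i / Real.sqrt (p i)) * Real.sqrt (q j) := by ring
      _ = c i j * Real.sqrt (p i) * Real.sqrt (q j) := by rw [hps]
  have hsum2 : ∑ ij : n × n, w ij * Real.exp (x ij)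
      = ∑ i, ∑ j, c i j * Real.sqrt (p i) * Real.sqrt (q j) := by
    simp only [hterm]
    rw [Fintype.sum_prod_type]
  have hsum1 : ∑ ij : n × n, w ij * x ij
      = ((∑ i, ∑ j, c i j * p i * Real.log (q j)) - ∑ i, p i * Real.log (p i)) / 2 := by
    rw [Fintype.sum_prod_type]
    have hinner : ∀ i, ∑ j, w (i, j) * x (i, j)
        = ((∑ j, c i j * p i * Real.log (q j)) - p i * Real.log (p i)) / 2 := by
      intro i
      have : ∑ j, w (i, j) * x (i, j)
          = ((∑ j, c i j * p i * Real.log (q j)) - (∑ j, c i j) * (p i * Real.log (p i))) / 2 := by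
        rw [Finset.sum_mul, ← Finset.sum_sub_distrib, Finset.sum_div]
        exact Finset.sum_congr rfl fun j _ => by simp only [hw, hx]; ring
      rw [this, hrow i, one_mul]
    rw [Finset.sum_congr rfl fun i _ => hinner i, ← Finset.sum_div, Finset.sum_sub_distrib]
  rw [hsum1] at hjen
  rw [hsum2] at hjen
  exact hjen

end Helpers

/-- for density matrices with `supp ρ ⊆ supp σ`,
`D(ρ‖σ) ≥ −2 log F(ρ,σ)`. -/
theorem stmt19_relEnt_ge_fidelity (ρ σ : Matrix n n ℂ)
    (hρ : IsDensity ρ) (hσ : IsDensity σ)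
    (hsupp : ∀ x : n → ℂ, σ.mulVec x = 0 → ρ.mulVec x = 0) :
    relEnt ρ σ ≥ -2 * Real.log (fidelity ρ σ) := by
  obtain ⟨hρP, hρtr⟩ := hρ
  obtain ⟨hσP, hσtr⟩ := hσ
  have hρH : ρ.IsHermitian := hρP.1
  have hσH : σ.IsHermitian := hσP.1
  set U : Matrix n n ℂ := (hρH.eigenvectorUnitary : Matrix n n ℂ) with hUdef
  set V : Matrix n n ℂ := (hσH.eigenvectorUnitary : Matrix n n ℂ) with hVdef
  set p : n → ℝ := hρH.eigenvalues with hpdef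
  set q : n → ℝ := hσH.eigenvalues with hqdef
  set c : n → n → ℝ := fun i j => Complex.normSq ((Uᴴ * V) i j) with hcdef
  have hρspec : ρ = U * Matrix.diagonal (fun i => ((p i : ℝ) : ℂ)) * Uᴴ := spectral ρ hρH
  have hσspec : σ = V * Matrix.diagonal (fun j => ((q j : ℝ) : ℂ)) * Vᴴ := spectral σ hσH
  have hU1 : Uᴴ * U = 1 := unit1 hρH
  have hU2 : U * Uᴴ = 1 := unit2 hρH
  have hV1 : Vᴴ * V = 1 := unit1 hσH
  have hV2 : V * Vᴴ = 1 := unit2 hσH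
  have hp0 : ∀ i, 0 ≤ p i := fun i => hρP.eigenvalues_nonneg i
  have hq0 : ∀ j, 0 ≤ q j := fun j => hσP.eigenvalues_nonneg j
  have hc0 : ∀ i j, 0 ≤ c i j := fun i j => Complex.normSq_nonneg _
  have hlogρ : mlog ρ = U * Matrix.diagonal (fun i => ((Real.log (p i) : ℝ) : ℂ)) * Uᴴ :=
    matFun_eq hρH Real.log
  have hlogσ : mlog σ = V * Matrix.diagonal (fun j => ((Real.log (q j) : ℝ) : ℂ)) * Vᴴ :=
    matFun_eq hσH Real.log
  have hsqρ : msqrt ρ = U * Matrix.diagonal (fun i => ((Real.sqrt (p i) : ℝ) : ℂ)) * Uᴴ :=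
    matFun_eq hρH Real.sqrt
  have hsqσ : msqrt σ = V * Matrix.diagonal (fun j => ((Real.sqrt (q j) : ℝ) : ℂ)) * Vᴴ :=
    matFun_eq hσH Real.sqrt
  -- trace identity 1
  have e1 : (Matrix.trace (ρ * mlog ρ)).re = ∑ i, p i * Real.log (p i) := by
    rw [hlogρ]
    conv_lhs => rw [hρspec]
    rw [traceform U U p (fun i => Real.log (p i)), ]
    rw [hU1]
    simp only [Matrix.one_apply, apply_ite Complex.normSq, Complex.normSq_one,
      Complex.normSq_zero, mul_ite, mul_one, mul_zero, Finset.sum_ite_eq, Finset.mem_univ,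
      if_true]
  -- trace identity 2
  have e2 : (Matrix.trace (ρ * mlog σ)).re = ∑ i, ∑ j, p i * Real.log (q j) * c i j := by
    rw [hlogσ]
    conv_lhs => rw [hρspec]
    exact traceform U V p (fun j => Real.log (q j))
  -- trace identity 3
  have e3 : (Matrix.trace (msqrt ρ * msqrt σ)).re
      = ∑ i, ∑ j, Real.sqrt (p i) * Real.sqrt (q j) * c i j := by
    rw [hsqρ, hsqσ]
    exact traceform U V (fun i => Real.sqrt (p i)) (fun j => Real.sqrt (q j))
  -- sum of eigenvalues of ρ is 1
  have etr : ∑ i, p i = 1 := by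
    have h := hρtr
    rw [hρspec, trace_conj U _ hU1, Matrix.trace_diagonal] at h
    have h2 := congrArg Complex.re h
    rw [Complex.re_sum] at h2
    simpa using h2
  -- row sums of c are 1
  have hrow : ∀ i, ∑ j, c i j = 1 := by
    have hMM : (Uᴴ * V) * (Uᴴ * V)ᴴ = 1 := by
      rw [Matrix.conjTranspose_mul, Matrix.conjTranspose_conjTranspose, Matrix.mul_assoc,
        ← Matrix.mul_assoc V, hV2, one_mul, hU1]
    intro i
    have h := congrFun (congrFun hMM i) i
    rw [Matrix.mul_apply, Matrix.one_apply_eq] at h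
    have h2 : (∑ j, (Complex.normSq ((Uᴴ * V) i j) : ℂ)) = 1 := by
      rw [← h]
      refine Finset.sum_congr rfl fun j _ => ?_
      rw [Matrix.conjTranspose_apply, Complex.star_def, Complex.mul_conj]
    have h3 := congrArg Complex.re h2
    rw [Complex.re_sum] at h3
    simpa [hcdef] using h3
  -- support condition
  have hkey : ∀ i j, q j = 0 → c i j * p i = 0 := by
    intro i j hqj
    have hcol : ⇑(hσH.eigenvectorBasis j) = fun k => V k j := by
      funext k
      exact (Matrix.IsHermitian.eigenvectorUnitary_apply hσH k j).symm
    have hx : σ.mulVec (fun k => V k j) = 0 := by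
      have hb := hσH.mulVec_eigenvectorBasis j
      rw [hcol] at hb
      have h0 : hσH.eigenvalues j = (0 : ℝ) := hqj
      rw [hb, h0, zero_smul]
    have hρx := hsupp _ hx
    have hUρ : Uᴴ * ρ = Matrix.diagonal (fun i => ((p i : ℝ) : ℂ)) * Uᴴ := by
      conv_lhs => rw [hρspec]
      simp only [← Matrix.mul_assoc]
      rw [hU1, one_mul]
    have h6 : Matrix.diagonal (fun i => ((p i : ℝ) : ℂ)) *ᵥ (Uᴴ *ᵥ (fun k => V k j)) = 0 := by
      rw [Matrix.mulVec_mulVec, ← hUρ, ← Matrix.mulVec_mulVec, hρx, Matrix.mulVec_zero]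
    have h7 := congrFun h6 i
    rw [Matrix.mulVec_diagonal] at h7
    have h8 : (Uᴴ *ᵥ (fun k => V k j)) i = (Uᴴ * V) i j := by
      simp [Matrix.mulVec, dotProduct, Matrix.mul_apply]
    rw [h8] at h7
    rcases mul_eq_zero.1 h7 with h | h
    · have hp0' : p i = 0 := by exact_mod_cast h
      rw [hp0', mul_zero]
    · have hc0' : c i j = 0 := by
        simp only [hcdef]
        rw [h, Complex.normSq_zero]
      rw [hc0', zero_mul]
  -- Jensen
  have hjc := jensen_core p q c hp0 hq0 hc0 hrow etr hkey
  have hE2 : ∑ i, ∑ j, c i j * p i * Real.log (q j) = (Matrix.trace (ρ * mlog σ)).re := by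
    rw [e2]
    exact Finset.sum_congr rfl fun i _ => Finset.sum_congr rfl fun j _ => by ring
  have hE3 : ∑ i, ∑ j, c i j * Real.sqrt (p i) * Real.sqrt (q j)
      = (Matrix.trace (msqrt ρ * msqrt σ)).re := by
    rw [e3]
    exact Finset.sum_congr rfl fun i _ => Finset.sum_congr rfl fun j _ => by ring
  have e4 : (Matrix.trace (msqrt ρ * msqrt σ)).re ≤ fidelity ρ σ :=
    re_trace_le_msqrt (msqrt ρ * msqrt σ)
  have hchain : Real.exp (((Matrix.trace (ρ * mlog σ)).re - (Matrix.trace (ρ * mlog ρ)).re) / 2)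
      ≤ fidelity ρ σ := by
    rw [← hE2, e1]
    exact le_trans hjc (by rw [hE3]; exact e4)
  have hFpos : 0 < fidelity ρ σ := lt_of_lt_of_le (Real.exp_pos _) hchain
  have hlog : ((Matrix.trace (ρ * mlog σ)).re - (Matrix.trace (ρ * mlog ρ)).re) / 2
      ≤ Real.log (fidelity ρ σ) := (Real.le_log_iff_exp_le hFpos).2 hchain
  have hD : relEnt ρ σ = (Matrix.trace (ρ * mlog ρ)).re - (Matrix.trace (ρ * mlog σ)).re :=
    Complex.sub_re _ _
  rw [ge_iff_le, hD]
  linarith
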